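/- arXiv:2110.01984 — 4 statements merged into one kernel-verified Lean document; each statement's English description precedes it below -/
import Mathlib

section
/- The ratio of Dirichlet densities is unbounded: for α ∈ ℝ^d_{>0}, x = (0,...,0), and x' = (1,0,...,0), the ratio of the density of Dir(x+α) to the density of Dir(x'+α) at a point y in the simplex equals (B(x'+α)/B(x+α)) · (1/y_1), which exceeds e^ε for y_1 sufficiently small, for any ε > 0. Hence Dirichlet posterior sampling is not ε-differentially private for any ε. -/
open Real

/-- The multivariate beta function `B(β) = ∏ i, Γ(β i) / Γ(∑ i, β i)`. -/
noncomputable def mvBeta {d : ℕ} (β : Fin d → ℝ) : ℝ :=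
  (∏ i, Gamma (β i)) / Gamma (∑ i, β i)

/-- The Dirichlet density (wrt the simplex measure) with parameter `β` at `y`. -/
noncomputable def dirDensity {d : ℕ} (β : Fin d → ℝ) (y : Fin d → ℝ) : ℝ :=
  (1 / mvBeta β) * ∏ i, (y i) ^ (β i - 1)

lemma mvBeta_pos' {d : ℕ} {β : Fin (d + 1) → ℝ} (h : ∀ i, 0 < β i) : 0 < mvBeta β := by
  unfold mvBeta
  apply div_pos
  · exact Finset.prod_pos fun i _ => Gamma_pos_of_pos (h i)
  · exact Gamma_pos_of_pos (Finset.sum_pos (fun i _ => h i) ⟨0, Finset.mem_univ 0⟩)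

/-- With `x = (0,…,0)` and `x' = (1,0,…,0)`, the ratio of the `Dir(x+α)` density to
the `Dir(x'+α)` density at a simplex point `y` equals `(B(x'+α)/B(x+α)) · (1/y 0)`,
and for any `ε > 0` there is a simplex point `y` at which this ratio exceeds `e^ε`.
Hence Dirichlet posterior sampling is not `ε`-differentially private for any `ε`. -/
theorem dirichlet_not_pure_dp (m : ℕ) (α : Fin (m + 2) → ℝ) (hα : ∀ i, 0 < α i)
    (x x' : Fin (m + 2) → ℝ) (hx : x = 0)
    (hx' : x' = fun i => if i = 0 then 1 else 0) :
    (∀ y : Fin (m + 2) → ℝ, (∀ i, 0 < y i) → ∑ i, y i = 1 →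
        dirDensity (x + α) y / dirDensity (x' + α) y
          = (mvBeta (x' + α) / mvBeta (x + α)) * (1 / y 0)) ∧
    (∀ ε : ℝ, 0 < ε → ∃ y : Fin (m + 2) → ℝ, (∀ i, 0 < y i) ∧ ∑ i, y i = 1 ∧
        dirDensity (x + α) y / dirDensity (x' + α) y > exp ε) := by
  subst hx hx'
  have hα' : ∀ i, 0 < ((fun i => if i = (0 : Fin (m+2)) then (1:ℝ) else 0) + α) i := by
    intro i
    simp only [Pi.add_apply]
    have := hα i
    split <;> linarith
  have hB1 : 0 < mvBeta ((0 : Fin (m+2) → ℝ) + α) := by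
    rw [zero_add]; exact mvBeta_pos' hα
  have hB2 : 0 < mvBeta ((fun i => if i = (0 : Fin (m+2)) then (1:ℝ) else 0) + α) :=
    mvBeta_pos' hα'
  have key : ∀ y : Fin (m + 2) → ℝ, (∀ i, 0 < y i) → ∑ i, y i = 1 →
      dirDensity ((0 : Fin (m+2) → ℝ) + α) y /
        dirDensity ((fun i => if i = (0 : Fin (m+2)) then (1:ℝ) else 0) + α) y
        = (mvBeta ((fun i => if i = (0 : Fin (m+2)) then (1:ℝ) else 0) + α) /
            mvBeta ((0 : Fin (m+2) → ℝ) + α)) * (1 / y 0) := by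
    intro y hy _
    have hP : 0 < ∏ i, (y i) ^ (α i - 1) :=
      Finset.prod_pos fun i _ => rpow_pos_of_pos (hy i) _
    have hprod : ∏ i, (y i) ^
        (((fun i => if i = (0 : Fin (m+2)) then (1:ℝ) else 0) + α) i - 1)
        = y 0 * ∏ i, (y i) ^ (α i - 1) := by
      have h0 : y 0 ^ (1 + α 0 - 1) = y 0 * y 0 ^ (α 0 - 1) := by
        rw [show (1 + α 0 - 1 : ℝ) = 1 + (α 0 - 1) by ring, rpow_add (hy 0), rpow_one]
      simp only [Fin.prod_univ_succ, Pi.add_apply, Fin.succ_ne_zero, ite_false, ite_true,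
        zero_add, if_true, if_false]
      rw [h0]; ring
    unfold dirDensity
    rw [hprod, zero_add]
    have hy0 := hy 0
    set P := ∏ i, (y i) ^ (α i - 1) with hPdef
    have hBα : 0 < mvBeta α := by rwa [zero_add] at hB1
    field_simp [hP.ne']
  refine ⟨key, ?_⟩
  intro ε hε
  set C : ℝ := mvBeta ((fun i => if i = (0 : Fin (m+2)) then (1:ℝ) else 0) + α) /
      mvBeta ((0 : Fin (m+2) → ℝ) + α) with hC
  have hCpos : 0 < C := div_pos hB2 hB1
  set t : ℝ := min (1/2) (C / (2 * exp ε)) with htdef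
  have ht0 : 0 < t := lt_min (by norm_num) (div_pos hCpos (by positivity))
  have ht1 : t ≤ 1/2 := min_le_left _ _
  set y : Fin (m + 2) → ℝ := fun i => if i = 0 then t else (1 - t) / (m + 1) with hydef
  have hy : ∀ i, 0 < y i := by
    intro i
    simp only [hydef]
    split
    · exact ht0
    · apply div_pos (by linarith) (by positivity)
  have hsum : ∑ i, y i = 1 := by
    rw [Fin.sum_univ_succ]
    simp only [hydef, if_pos rfl, Fin.succ_ne_zero, if_neg, if_false]
    rw [Finset.sum_const, Finset.card_univ, Fintype.card_fin, nsmul_eq_mul]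
    have : (m + 1 : ℝ) ≠ 0 := by positivity
    push_cast
    field_simp
    ring
  refine ⟨y, hy, hsum, ?_⟩
  rw [key y hy hsum]
  have hy0 : y 0 = t := by simp [hydef]
  rw [hy0, mul_one_div, gt_iff_lt, lt_div_iff₀ ht0]
  have h1 : t * (2 * exp ε) ≤ C := by
    have := min_le_right (1/2 : ℝ) (C / (2 * exp ε))
    rw [le_div_iff₀ (by positivity)] at this
    exact this
  nlinarith [exp_pos ε, ht0]
end

section
/- For Dirichlet distributions P = Dir(u) and P' = Dir(u') with u, u' ∈ ℝ^d_{>0}, and λ > 1 with u + (λ-1)(u - u') ∈ ℝ^d_{>0} componentwise and Σ_i(u_i + (λ-1)(u_i - u'_i)) > 0, the Rényi divergence satisfies (λ-1) D_λ(P‖P') = Σ_i [(λ-1)(log Γ(u'_i) - log Γ(u_i)) + log Γ(u_i + (λ-1)(u_i - u'_i)) - log Γ(u_i)] - [(λ-1)(log Γ(u'_0) - log Γ(u_0)) + log Γ(u_0 + (λ-1)(u_0 - u'_0)) - log Γ(u_0)], where u_0 = Σ_i u_i and u'_0 = Σ_i u'_i. -/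
open MeasureTheory Real

/-- The Dirichlet density with parameter `β` on the open probability simplex,
parametrized by its first `m` coordinates (the last being `1 - ∑ y i`). -/
noncomputable def dirDens {m : ℕ} (β : Fin (m + 1) → ℝ) (y : Fin m → ℝ) : ℝ :=
  (Gamma (∑ i, β i) / ∏ i, Gamma (β i)) *
    ((∏ i : Fin m, (y i) ^ (β i.castSucc - 1)) * (1 - ∑ i, y i) ^ (β (Fin.last m) - 1))

open Set intervalIntegral
open scoped ENNReal

lemma betaReal_scaled {a b c : ℝ} (ha : 0 < a) (hb : 0 < b) (hc : 0 < c) :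
    ∫ t in (0)..c, t ^ (a - 1) * (c - t) ^ (b - 1)
      = c ^ (a + b - 1) * (Gamma a * Gamma b / Gamma (a + b)) := by
  have hare : 0 < Complex.re a := by simpa using ha
  have hbre : 0 < Complex.re b := by simpa using hb
  have key := Complex.betaIntegral_scaled (a : ℂ) (b : ℂ) hc
  have hab : Complex.Gamma ((a : ℂ) + b) ≠ 0 := by
    rw [← Complex.ofReal_add, Complex.Gamma_ofReal]
    exact_mod_cast (Real.Gamma_pos_of_pos (by linarith)).ne'
  have hbeta : Complex.betaIntegral a b
      = Complex.Gamma a * Complex.Gamma b / Complex.Gamma ((a : ℂ) + b) := by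
    field_simp [eq_div_iff hab]
    rw [Complex.Gamma_mul_Gamma_eq_betaIntegral hare hbre]; ring
  have hcoe : ((∫ t in (0)..c, t ^ (a - 1) * (c - t) ^ (b - 1) : ℝ) : ℂ)
      = ∫ t in (0)..c, ((t : ℂ) ^ ((a : ℂ) - 1) * (((c : ℂ)) - t) ^ ((b : ℂ) - 1)) := by
    rw [← intervalIntegral.integral_ofReal]
    refine intervalIntegral.integral_congr fun t ht => ?_
    rw [uIcc_of_le hc.le] at ht
    rw [Complex.ofReal_mul, Complex.ofReal_cpow ht.1 (a - 1),
      Complex.ofReal_cpow (by linarith [ht.2] : (0:ℝ) ≤ c - t) (b - 1)]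
    push_cast; ring
  apply Complex.ofReal_injective
  rw [hcoe, key, hbeta]
  rw [Complex.ofReal_mul, Complex.ofReal_cpow hc.le (a + b - 1)]
  push_cast [← Complex.Gamma_ofReal]
  ring


lemma betaReal_intervalIntegrable {a b c : ℝ} (ha : 0 < a) (hb : 0 < b) (hc : 0 < c) :
    IntervalIntegrable (fun t => t ^ (a - 1) * (c - t) ^ (b - 1)) volume 0 c := by
  have h1 : IntervalIntegrable (fun t => t ^ (a - 1) * (c - t) ^ (b - 1)) volume 0 (c / 2) := by
    apply IntervalIntegrable.mul_continuousOn
    · exact intervalIntegrable_rpow' (by linarith)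
    · apply ContinuousOn.rpow_const (continuousOn_const.sub continuousOn_id)
      intro t ht
      rw [uIcc_of_le (by linarith : (0:ℝ) ≤ c / 2)] at ht
      exact Or.inl (by intro h; simp only [Pi.sub_apply, id] at h; linarith [ht.2])
  have h2 : IntervalIntegrable (fun t => t ^ (a - 1) * (c - t) ^ (b - 1)) volume (c / 2) c := by
    have hbase : IntervalIntegrable (fun t : ℝ => (c - t) ^ (b - 1)) volume (c / 2) c := by
      have := (intervalIntegrable_rpow' (a := 0) (b := c / 2)
        (r := b - 1) (by linarith)).comp_sub_left c
      simpa [sub_half] using this.symm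
    have := hbase.mul_continuousOn (g := fun t => t ^ (a - 1)) ?_
    · simpa [mul_comm] using this
    · apply ContinuousOn.rpow_const continuousOn_id
      intro t ht
      rw [uIcc_of_le (by linarith : c / 2 ≤ c)] at ht
      exact Or.inl (by simp only [id]; intro h; rw [h] at ht; linarith [ht.1])
  exact h1.trans h2

lemma betaReal_lintegral {a b c : ℝ} (ha : 0 < a) (hb : 0 < b) (hc : 0 < c) :
    ∫⁻ t in Ioo 0 c, ENNReal.ofReal (t ^ (a - 1) * (c - t) ^ (b - 1))
      = ENNReal.ofReal (c ^ (a + b - 1) * (Gamma a * Gamma b / Gamma (a + b))) := by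
  have hInt : IntegrableOn (fun t => t ^ (a - 1) * (c - t) ^ (b - 1)) (Ioo 0 c) := by
    have := (betaReal_intervalIntegrable ha hb hc).1
    exact this.mono_set Ioo_subset_Ioc_self
  rw [← ofReal_integral_eq_lintegral_ofReal hInt]
  · congr 1
    have : ∫ t in Ioo 0 c, t ^ (a - 1) * (c - t) ^ (b - 1)
        = ∫ t in (0)..c, t ^ (a - 1) * (c - t) ^ (b - 1) := by
      rw [intervalIntegral.integral_of_le hc.le, ← integral_Ioc_eq_integral_Ioo]
    rw [this, betaReal_scaled ha hb hc]
  · filter_upwards [ae_restrict_mem measurableSet_Ioo] with t ht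
    exact mul_nonneg (Real.rpow_nonneg ht.1.le _) (Real.rpow_nonneg (by linarith [ht.2]) _)




lemma measurableSet_simplex (m : ℕ) :
    MeasurableSet {y : Fin m → ℝ | (∀ i, 0 < y i) ∧ ∑ i, y i < 1} := by
  have h : {y : Fin m → ℝ | (∀ i, 0 < y i) ∧ ∑ i, y i < 1}
      = (⋂ i, {y : Fin m → ℝ | 0 < y i}) ∩ {y : Fin m → ℝ | ∑ i, y i < 1} := by
    ext y; simp [Set.mem_iInter]
  rw [h]
  exact (MeasurableSet.iInter fun i =>
      measurableSet_lt measurable_const (measurable_pi_apply i)).inter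
    (measurableSet_lt (Finset.measurable_sum _ fun i _ => measurable_pi_apply i)
      measurable_const)

lemma kernel_measurable (m : ℕ) (β : Fin (m + 1) → ℝ) :
    Measurable fun y : Fin m → ℝ => ENNReal.ofReal
      ((∏ i : Fin m, (y i) ^ (β i.castSucc - 1)) * (1 - ∑ i, y i) ^ (β (Fin.last m) - 1)) := by
  measurability

lemma dirichlet_lintegral : ∀ (m : ℕ) (β : Fin (m + 1) → ℝ), (∀ i, 0 < β i) →
    ∫⁻ y in {y : Fin m → ℝ | (∀ i, 0 < y i) ∧ ∑ i, y i < 1},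
      ENNReal.ofReal ((∏ i : Fin m, (y i) ^ (β i.castSucc - 1)) *
        (1 - ∑ i, y i) ^ (β (Fin.last m) - 1))
      = ENNReal.ofReal ((∏ i, Gamma (β i)) / Gamma (∑ i, β i)) := by
  intro m
  induction m with
  | zero =>
    intro β hβ
    have hs : {y : Fin 0 → ℝ | (∀ i, 0 < y i) ∧ ∑ i, y i < 1} = Set.univ := by
      ext y; simp [Fin.forall_fin_zero_pi]
    rw [hs]
    have h1 : ∀ y : Fin 0 → ℝ,
        ((∏ i : Fin 0, (y i) ^ (β i.castSucc - 1)) * (1 - ∑ i, y i) ^ (β (Fin.last 0) - 1))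
          = 1 := by
      intro y; simp
    simp_rw [h1]
    rw [Measure.restrict_univ, lintegral_const]
    have hvol : (volume : Measure (Fin 0 → ℝ)) Set.univ = 1 := by
      rw [volume_pi, Measure.pi_univ]; simp
    have h2 : (∏ i, Gamma (β i)) / Gamma (∑ i, β i) = 1 := by
      rw [Fin.prod_univ_one, Fin.sum_univ_one]
      exact div_self (Real.Gamma_pos_of_pos (hβ 0)).ne'
    rw [hvol, h2]
    simp
  | succ m ih =>
    intro β hβ
    set S : Set (Fin (m + 1) → ℝ) := {y | (∀ i, 0 < y i) ∧ ∑ i, y i < 1} with hS_def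
    set S' : Set (Fin m → ℝ) := {z | (∀ i, 0 < z i) ∧ ∑ i, z i < 1} with hS'_def
    set F : (Fin (m + 1) → ℝ) → ℝ≥0∞ := fun y => ENNReal.ofReal
      ((∏ i : Fin (m + 1), (y i) ^ (β i.castSucc - 1)) *
        (1 - ∑ i, y i) ^ (β (Fin.last (m + 1)) - 1)) with hF_def
    set a : ℝ := β ((Fin.last m).castSucc) with ha_def
    set b : ℝ := β (Fin.last (m + 1)) with hb_def
    have ha : 0 < a := hβ _
    have hb : 0 < b := hβ _
    set K : ℝ := Gamma a * Gamma b / Gamma (a + b) with hK_def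
    have hK : 0 ≤ K := by
      apply div_nonneg (mul_nonneg (Real.Gamma_pos_of_pos ha).le
        (Real.Gamma_pos_of_pos hb).le) (Real.Gamma_pos_of_pos (by linarith)).le
    set P : (Fin m → ℝ) → ℝ := fun z => ∏ j : Fin m, (z j) ^ (β j.castSucc.castSucc - 1)
      with hP_def
    set e := MeasurableEquiv.piFinSuccAbove (fun _ : Fin (m + 1) => ℝ) (Fin.last m) with he_def
    have hsnoc : ∀ (t : ℝ) (z : Fin m → ℝ), e.symm (t, z) = Fin.snoc z t := by
      intro t z
      rw [he_def]
      ext i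
      refine Fin.lastCases ?_ (fun j => ?_) i <;>
        simp [MeasurableEquiv.piFinSuccAbove_symm_apply]
    have hFmeas : Measurable F := kernel_measurable (m + 1) β
    have hmp : MeasurePreserving e.symm (volume : Measure (ℝ × (Fin m → ℝ))) volume := by
      rw [Measure.volume_eq_prod, volume_pi, volume_pi]
      exact (measurePreserving_piFinSuccAbove (fun _ : Fin (m+1) => (volume : Measure ℝ))
        (Fin.last m)).symm
    have step1 : ∫⁻ y in S, F y
        = ∫⁻ p : ℝ × (Fin m → ℝ), (S.indicator F) (e.symm p) := by
      rw [← lintegral_indicator (measurableSet_simplex (m + 1))]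
      exact (hmp.lintegral_comp_emb e.symm.measurableEmbedding _).symm
    have hmem : ∀ (t : ℝ) (z : Fin m → ℝ),
        (Fin.snoc z t : Fin (m + 1) → ℝ) ∈ S ↔ z ∈ S' ∧ t ∈ Ioo 0 (1 - ∑ j, z j) := by
      intro t z
      have hsum : ∑ i : Fin (m + 1), (Fin.snoc z t : Fin (m+1) → ℝ) i = (∑ j, z j) + t := by
        rw [Fin.sum_univ_castSucc]; simp
      constructor
      · rintro ⟨hpos, hlt⟩
        rw [hsum] at hlt
        have ht : 0 < t := by simpa using hpos (Fin.last m)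
        have hz : ∀ j, 0 < z j := fun j => by simpa using hpos j.castSucc
        exact ⟨⟨hz, by linarith⟩, ht, by linarith⟩
      · rintro ⟨⟨hz, _⟩, ht0, htlt⟩
        refine ⟨fun i => ?_, by rw [hsum]; linarith⟩
        refine Fin.lastCases ?_ (fun j => ?_) i
        · simpa using ht0
        · simpa using hz j
    have hval : ∀ (t : ℝ) (z : Fin m → ℝ),
        F (Fin.snoc z t) = ENNReal.ofReal
          (P z * (t ^ (a - 1) * ((1 - ∑ j, z j) - t) ^ (b - 1))) := by
      intro t z
      simp only [hF_def]
      rw [Fin.prod_univ_castSucc, Fin.sum_univ_castSucc]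
      simp only [Fin.snoc_castSucc, Fin.snoc_last, hP_def]
      have hsub : (1 : ℝ) - ((∑ j, z j) + t) = (1 - ∑ j, z j) - t := by ring
      rw [hsub]
      congr 1
      ring
    have inner : ∀ z : Fin m → ℝ,
        (∫⁻ t, (S.indicator F) (e.symm (t, z)))
          = S'.indicator (fun z => ENNReal.ofReal
              (K * (P z * (1 - ∑ j, z j) ^ (a + b - 1)))) z := by
      intro z
      by_cases hz : z ∈ S'
      · have hz' := hz
        obtain ⟨hz1, hz2⟩ := hz'
        have hc : 0 < 1 - ∑ j, z j := by linarith
        have hPz : 0 ≤ P z := Finset.prod_nonneg fun j _ => Real.rpow_nonneg (hz1 j).le _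
        have heq : ∀ t : ℝ, (S.indicator F) (e.symm (t, z))
            = (Ioo (0:ℝ) (1 - ∑ j, z j)).indicator
                (fun t => ENNReal.ofReal (P z) * ENNReal.ofReal
                  (t ^ (a - 1) * ((1 - ∑ j, z j) - t) ^ (b - 1))) t := by
          intro t
          rw [hsnoc]
          by_cases ht : t ∈ Ioo (0:ℝ) (1 - ∑ j, z j)
          · rw [Set.indicator_of_mem ((hmem t z).mpr ⟨hz, ht⟩),
              Set.indicator_of_mem ht, hval, ENNReal.ofReal_mul hPz]
          · rw [Set.indicator_of_notMem (fun h => ht ((hmem t z).mp h).2),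
              Set.indicator_of_notMem ht]
        simp_rw [heq]
        rw [lintegral_indicator measurableSet_Ioo, Set.indicator_of_mem hz,
          lintegral_const_mul' _ _ ENNReal.ofReal_ne_top,
          betaReal_lintegral ha hb hc, ← ENNReal.ofReal_mul hPz]
        congr 1
        rw [hK_def]
        ring
      · rw [Set.indicator_of_notMem hz]
        have heq : ∀ t : ℝ, (S.indicator F) (e.symm (t, z)) = 0 := by
          intro t
          rw [hsnoc]
          exact Set.indicator_of_notMem (fun h => hz ((hmem t z).mp h).1) _
        simp_rw [heq, lintegral_zero]
    have fub := lintegral_prod_symm (μ := (volume : Measure ℝ))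
      (ν := (volume : Measure (Fin m → ℝ))) (fun p => (S.indicator F) (e.symm p))
      ((hFmeas.indicator (measurableSet_simplex (m+1))).comp e.symm.measurable).aemeasurable
    rw [step1, Measure.volume_eq_prod, fub]
    simp_rw [inner]
    rw [lintegral_indicator (measurableSet_simplex m)]
    have hrw : ∀ z : Fin m → ℝ, ENNReal.ofReal (K * (P z * (1 - ∑ j, z j) ^ (a + b - 1)))
        = ENNReal.ofReal K * ENNReal.ofReal (P z * (1 - ∑ j, z j) ^ (a + b - 1)) :=
      fun z => ENNReal.ofReal_mul hK
    simp_rw [hrw]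
    rw [lintegral_const_mul' _ _ ENNReal.ofReal_ne_top]
    set β' : Fin (m + 1) → ℝ := Fin.snoc (fun j : Fin m => β j.castSucc.castSucc) (a + b)
      with hβ'_def
    have hβ' : ∀ i, 0 < β' i := by
      intro i
      refine Fin.lastCases ?_ (fun j => ?_) i
      · rw [hβ'_def]; simp only [Fin.snoc_last]; linarith
      · rw [hβ'_def]; simp only [Fin.snoc_castSucc]; exact hβ _
    have hIH := ih β' hβ'
    have hmatch : ∀ z : Fin m → ℝ,
        ENNReal.ofReal ((∏ i : Fin m, (z i) ^ (β' i.castSucc - 1)) *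
          (1 - ∑ i, z i) ^ (β' (Fin.last m) - 1))
        = ENNReal.ofReal (P z * (1 - ∑ j, z j) ^ (a + b - 1)) := by
      intro z
      rw [hβ'_def, hP_def]
      simp only [Fin.snoc_castSucc, Fin.snoc_last]
    simp_rw [← hmatch]
    rw [hIH]
    rw [← ENNReal.ofReal_mul hK]
    congr 1
    have hsumβ : ∑ i, β' i = ∑ i, β i := by
      rw [Fin.sum_univ_castSucc (f := β'), Fin.sum_univ_castSucc (f := β),
        Fin.sum_univ_castSucc (f := fun i : Fin (m + 1) => β i.castSucc)]
      simp only [hβ'_def, Fin.snoc_castSucc, Fin.snoc_last, ha_def, hb_def]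
      ring
    have hprodβ : ∏ i, Gamma (β' i)
        = (∏ j : Fin m, Gamma (β j.castSucc.castSucc)) * Gamma (a + b) := by
      rw [Fin.prod_univ_castSucc (f := fun i => Gamma (β' i))]
      simp only [hβ'_def, Fin.snoc_castSucc, Fin.snoc_last]
    have hprodall : ∏ i, Gamma (β i)
        = ((∏ j : Fin m, Gamma (β j.castSucc.castSucc)) * Gamma a) * Gamma b := by
      rw [Fin.prod_univ_castSucc (f := fun i => Gamma (β i)),
        Fin.prod_univ_castSucc (f := fun i : Fin (m + 1) => Gamma (β i.castSucc))]
    have hGab : Gamma (a + b) ≠ 0 := (Real.Gamma_pos_of_pos (by linarith)).ne'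
    rw [hsumβ, hprodβ, hprodall, hK_def]
    calc Gamma a * Gamma b / Gamma (a + b) *
          (((∏ j : Fin m, Gamma (β j.castSucc.castSucc)) * Gamma (a + b)) /
            Gamma (∑ i : Fin (m + 1 + 1), β i))
        = ((Gamma a * Gamma b * ∏ j : Fin m, Gamma (β j.castSucc.castSucc)) * Gamma (a + b)) /
          (Gamma (∑ i : Fin (m + 1 + 1), β i) * Gamma (a + b)) := by
          rw [div_mul_div_comm]; ring_nf
      _ = (Gamma a * Gamma b * ∏ j : Fin m, Gamma (β j.castSucc.castSucc)) /
          Gamma (∑ i : Fin (m + 1 + 1), β i) := by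
          rw [mul_div_mul_right _ _ hGab]
      _ = ((∏ j : Fin m, Gamma (β j.castSucc.castSucc)) * Gamma a * Gamma b) /
          Gamma (∑ i : Fin (m + 1 + 1), β i) := by ring


lemma dirichlet_integral (m : ℕ) (β : Fin (m + 1) → ℝ) (hβ : ∀ i, 0 < β i) :
    ∫ y in {y : Fin m → ℝ | (∀ i, 0 < y i) ∧ ∑ i, y i < 1},
      (∏ i : Fin m, (y i) ^ (β i.castSucc - 1)) * (1 - ∑ i, y i) ^ (β (Fin.last m) - 1)
      = (∏ i, Gamma (β i)) / Gamma (∑ i, β i) := by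
  have hsum : 0 < ∑ i, β i := Finset.sum_pos (fun i _ => hβ i) Finset.univ_nonempty
  rw [integral_eq_lintegral_of_nonneg_ae]
  · rw [dirichlet_lintegral m β hβ, ENNReal.toReal_ofReal]
    exact div_nonneg (Finset.prod_nonneg fun i _ => (Real.Gamma_pos_of_pos (hβ i)).le)
      (Real.Gamma_pos_of_pos hsum).le
  · filter_upwards [ae_restrict_mem (measurableSet_simplex m)] with y hy
    exact mul_nonneg (Finset.prod_nonneg fun i _ => Real.rpow_nonneg (hy.1 i).le _)
      (Real.rpow_nonneg (by linarith [hy.2]) _)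
  · apply Measurable.aestronglyMeasurable
    measurability

lemma pow_comb {x : ℝ} (hx : 0 < x) (p q l : ℝ) :
    (x ^ (p - 1)) ^ l * (x ^ (q - 1)) ^ (1 - l) = x ^ ((l * p + (1 - l) * q) - 1) := by
  rw [← Real.rpow_mul hx.le, ← Real.rpow_mul hx.le, ← Real.rpow_add hx]
  congr 1; ring

/-- The Rényi divergence identity for Dirichlet distributions `P = Dir(u)`,
`P' = Dir(u')`: `(λ-1) D_λ(P‖P') = log ∫ P(y)^λ P'(y)^{1-λ} dy` equals the stated
combination of log-gamma values. -/
theorem dirichlet_renyi_identity (m : ℕ) (u u' : Fin (m + 1) → ℝ)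
    (hu : ∀ i, 0 < u i) (hu' : ∀ i, 0 < u' i) (l : ℝ) (hl : 1 < l)
    (hpos : ∀ i, 0 < u i + (l - 1) * (u i - u' i))
    (hpos0 : 0 < ∑ i, (u i + (l - 1) * (u i - u' i))) :
    Real.log (∫ y in {y : Fin m → ℝ | (∀ i, 0 < y i) ∧ ∑ i, y i < 1},
        (dirDens u y) ^ l * (dirDens u' y) ^ (1 - l))
      = (∑ i, ((l - 1) * (Real.log (Gamma (u' i)) - Real.log (Gamma (u i)))
            + Real.log (Gamma (u i + (l - 1) * (u i - u' i))) - Real.log (Gamma (u i))))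
        - ((l - 1) * (Real.log (Gamma (∑ i, u' i)) - Real.log (Gamma (∑ i, u i)))
            + Real.log (Gamma ((∑ i, u i) + (l - 1) * ((∑ i, u i) - ∑ i, u' i)))
            - Real.log (Gamma (∑ i, u i))) := by
  classical
  set v : Fin (m + 1) → ℝ := fun i => u i + (l - 1) * (u i - u' i) with hv_def
  have hv : ∀ i, 0 < v i := hpos
  have hvcomb : ∀ i, v i = l * u i + (1 - l) * u' i := fun i => by rw [hv_def]; ring
  have husum : 0 < ∑ i, u i := Finset.sum_pos (fun i _ => hu i) Finset.univ_nonempty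
  have hu'sum : 0 < ∑ i, u' i := Finset.sum_pos (fun i _ => hu' i) Finset.univ_nonempty
  have hvsum : ∑ i, v i = (∑ i, u i) + (l - 1) * ((∑ i, u i) - ∑ i, u' i) := by
    simp only [hv_def]
    rw [Finset.sum_add_distrib, ← Finset.mul_sum, Finset.sum_sub_distrib]
  have hvsum0 : 0 < ∑ i, v i := hpos0
  -- positive constants
  set Au : ℝ := Gamma (∑ i, u i) / ∏ i, Gamma (u i) with hAu_def
  set Au' : ℝ := Gamma (∑ i, u' i) / ∏ i, Gamma (u' i) with hAu'_def
  set Bv : ℝ := (∏ i, Gamma (v i)) / Gamma (∑ i, v i) with hBv_def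
  have hAu : 0 < Au := div_pos (Real.Gamma_pos_of_pos husum)
    (Finset.prod_pos fun i _ => Real.Gamma_pos_of_pos (hu i))
  have hAu' : 0 < Au' := div_pos (Real.Gamma_pos_of_pos hu'sum)
    (Finset.prod_pos fun i _ => Real.Gamma_pos_of_pos (hu' i))
  have hBv : 0 < Bv := div_pos (Finset.prod_pos fun i _ => Real.Gamma_pos_of_pos (hv i))
    (Real.Gamma_pos_of_pos hvsum0)
  set C : ℝ := Au ^ l * Au' ^ (1 - l) with hC_def
  have hC : 0 < C := mul_pos (Real.rpow_pos_of_pos hAu l) (Real.rpow_pos_of_pos hAu' (1 - l))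
  -- pointwise identity on the simplex
  have key : ∀ y ∈ {y : Fin m → ℝ | (∀ i, 0 < y i) ∧ ∑ i, y i < 1},
      (dirDens u y) ^ l * (dirDens u' y) ^ (1 - l)
        = C * ((∏ i : Fin m, (y i) ^ (v i.castSucc - 1)) *
            (1 - ∑ i, y i) ^ (v (Fin.last m) - 1)) := by
    rintro y ⟨hy1, hy2⟩
    have hs : (0:ℝ) < 1 - ∑ i, y i := by linarith
    have hPu : (0:ℝ) ≤ ∏ i : Fin m, (y i) ^ (u i.castSucc - 1) :=
      Finset.prod_nonneg fun i _ => Real.rpow_nonneg (hy1 i).le _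
    have hPu' : (0:ℝ) ≤ ∏ i : Fin m, (y i) ^ (u' i.castSucc - 1) :=
      Finset.prod_nonneg fun i _ => Real.rpow_nonneg (hy1 i).le _
    unfold dirDens
    rw [Real.mul_rpow hAu.le (mul_nonneg hPu (Real.rpow_nonneg hs.le _)),
      Real.mul_rpow hAu'.le (mul_nonneg hPu' (Real.rpow_nonneg hs.le _)),
      Real.mul_rpow hPu (Real.rpow_nonneg hs.le _),
      Real.mul_rpow hPu' (Real.rpow_nonneg hs.le _),
      ← Real.finset_prod_rpow _ _ (fun i _ => Real.rpow_nonneg (hy1 i).le _) l,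
      ← Real.finset_prod_rpow _ _ (fun i _ => Real.rpow_nonneg (hy1 i).le _) (1 - l)]
    rw [hC_def]
    have hprod : (∏ i : Fin m, ((y i) ^ (u i.castSucc - 1)) ^ l) *
        (∏ i : Fin m, ((y i) ^ (u' i.castSucc - 1)) ^ (1 - l))
        = ∏ i : Fin m, (y i) ^ (v i.castSucc - 1) := by
      rw [← Finset.prod_mul_distrib]
      exact Finset.prod_congr rfl fun i _ => by
        rw [pow_comb (hy1 i) _ _ l, hvcomb i.castSucc]
    have hlast : ((1 - ∑ i, y i) ^ (u (Fin.last m) - 1)) ^ l *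
        ((1 - ∑ i, y i) ^ (u' (Fin.last m) - 1)) ^ (1 - l)
        = (1 - ∑ i, y i) ^ (v (Fin.last m) - 1) := by
      rw [pow_comb hs _ _ l, hvcomb (Fin.last m)]
    calc Au ^ l * ((∏ i : Fin m, ((y i) ^ (u i.castSucc - 1)) ^ l) *
            ((1 - ∑ i, y i) ^ (u (Fin.last m) - 1)) ^ l) *
          (Au' ^ (1 - l) * ((∏ i : Fin m, ((y i) ^ (u' i.castSucc - 1)) ^ (1 - l)) *
            ((1 - ∑ i, y i) ^ (u' (Fin.last m) - 1)) ^ (1 - l)))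
        = Au ^ l * Au' ^ (1 - l) *
          (((∏ i : Fin m, ((y i) ^ (u i.castSucc - 1)) ^ l) *
            (∏ i : Fin m, ((y i) ^ (u' i.castSucc - 1)) ^ (1 - l))) *
          (((1 - ∑ i, y i) ^ (u (Fin.last m) - 1)) ^ l *
            ((1 - ∑ i, y i) ^ (u' (Fin.last m) - 1)) ^ (1 - l))) := by ring
      _ = Au ^ l * Au' ^ (1 - l) * ((∏ i : Fin m, (y i) ^ (v i.castSucc - 1)) *
            (1 - ∑ i, y i) ^ (v (Fin.last m) - 1)) := by rw [hprod, hlast]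
  -- compute the integral
  have hint : ∫ y in {y : Fin m → ℝ | (∀ i, 0 < y i) ∧ ∑ i, y i < 1},
      (dirDens u y) ^ l * (dirDens u' y) ^ (1 - l) = C * Bv := by
    rw [setIntegral_congr_fun (measurableSet_simplex m) key, MeasureTheory.integral_const_mul,
      dirichlet_integral m v hv, hBv_def]
  rw [hint, Real.log_mul hC.ne' hBv.ne', hC_def,
    Real.log_mul (Real.rpow_pos_of_pos hAu l).ne' (Real.rpow_pos_of_pos hAu' (1 - l)).ne',
    Real.log_rpow hAu, Real.log_rpow hAu', hAu_def, hAu'_def, hBv_def,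
    Real.log_div (Finset.prod_pos fun i _ => Real.Gamma_pos_of_pos (hv i)).ne'
      (Real.Gamma_pos_of_pos hvsum0).ne',
    Real.log_div (Real.Gamma_pos_of_pos husum).ne'
      (Finset.prod_pos fun i _ => Real.Gamma_pos_of_pos (hu i)).ne',
    Real.log_div (Real.Gamma_pos_of_pos hu'sum).ne'
      (Finset.prod_pos fun i _ => Real.Gamma_pos_of_pos (hu' i)).ne',
    Real.log_prod (fun i _ => (Real.Gamma_pos_of_pos (hv i)).ne'),
    Real.log_prod (fun i _ => (Real.Gamma_pos_of_pos (hu i)).ne'),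
    Real.log_prod (fun i _ => (Real.Gamma_pos_of_pos (hu' i)).ne'),
    hvsum]
  have hrhs : ∑ i, ((l - 1) * (Real.log (Gamma (u' i)) - Real.log (Gamma (u i)))
        + Real.log (Gamma (u i + (l - 1) * (u i - u' i))) - Real.log (Gamma (u i)))
      = (l - 1) * ((∑ i, Real.log (Gamma (u' i))) - ∑ i, Real.log (Gamma (u i)))
        + (∑ i, Real.log (Gamma (v i))) - ∑ i, Real.log (Gamma (u i)) := by
    simp only [hv_def, Finset.sum_sub_distrib, Finset.sum_add_distrib, ← Finset.mul_sum]
  rw [hrhs]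
  ring
end

section
/- For any a, b > 0 and λ > 1 with a + (λ-1)(a-b) > 0, the quantity (λ-1)(log Γ(b) - log Γ(a)) + log Γ(a + (λ-1)(a-b)) - log Γ(a) is nonnegative. -/
open Real

/-- For `a, b > 0` and `λ > 1` with `a + (λ-1)(a-b) > 0`, the quantity
`(λ-1)(log Γ(b) - log Γ(a)) + log Γ(a + (λ-1)(a-b)) - log Γ(a)` is nonnegative. -/
theorem logGamma_combination_nonneg (a b l : ℝ) (ha : 0 < a) (hb : 0 < b) (hl : 1 < l)
    (hpos : 0 < a + (l - 1) * (a - b)) :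
    0 ≤ (l - 1) * (Real.log (Gamma b) - Real.log (Gamma a))
          + Real.log (Gamma (a + (l - 1) * (a - b))) - Real.log (Gamma a) := by
  set t := l - 1 with ht
  have htpos : 0 < t := by simp [ht]; linarith
  have h1t : 0 < 1 + t := by linarith
  have key := Real.convexOn_log_Gamma.2 (Set.mem_Ioi.2 hb) (Set.mem_Ioi.2 hpos)
    (le_of_lt (div_pos htpos h1t)) (le_of_lt (div_pos one_pos h1t))
    (by field_simp; ring)
  have hcomb : (t / (1 + t)) • b + (1 / (1 + t)) • (a + t * (a - b)) = a := by
    simp only [smul_eq_mul]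
    field_simp
    ring
  rw [hcomb] at key
  simp only [Function.comp_apply, smul_eq_mul] at key
  have : (1 + t) * Real.log (Gamma a) ≤ t * Real.log (Gamma b)
      + Real.log (Gamma (a + t * (a - b))) := by
    have := mul_le_mul_of_nonneg_left key (le_of_lt h1t)
    calc (1 + t) * Real.log (Gamma a) ≤ (1 + t) * (t / (1 + t) * Real.log (Gamma b)
        + 1 / (1 + t) * Real.log (Gamma (a + t * (a - b)))) := this
      _ = t * Real.log (Gamma b) + Real.log (Gamma (a + t * (a - b))) := by
        field_simp
  linarith
end

section
/- The function f(λ) = (λ-1)(ε̂(λ) - ε) + (λ-1)log(λ-1) - λ log λ, where ε̂(λ) = (λ/2)Δ_2² ψ'(α_m - (λ-1)Δ_∞), is strictly convex on the interval (1, α_m/Δ_∞ + 1), for any constants ε, Δ_2, Δ_∞, α_m > 0. -/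
open Real

/-- The trigamma function `ψ'`, via its series representation. -/
noncomputable def trigamma (x : ℝ) : ℝ := ∑' n : ℕ, 1 / (x + n) ^ 2

lemma summable_trig {x : ℝ} (hx : 0 < x) :
    Summable (fun n : ℕ => 1 / (x + n) ^ 2) := by
  rw [← summable_nat_add_iff 1]
  have hbase : Summable (fun n : ℕ => 1 / ((n : ℝ) + 1) ^ 2) := by
    have := (summable_nat_add_iff (f := fun n : ℕ => 1 / (n : ℝ) ^ 2) 1).mpr
      (summable_one_div_nat_pow.mpr one_lt_two)
    simpa using this
  refine Summable.of_nonneg_of_le (fun n => by positivity) (fun n => ?_) hbase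
  have h1 : (0 : ℝ) < (n : ℝ) + 1 := by positivity
  have h2 : (n : ℝ) + 1 ≤ x + (n + 1 : ℕ) := by push_cast; linarith
  gcongr

lemma trig_nonneg (x : ℝ) : 0 ≤ trigamma x :=
  tsum_nonneg fun n => by positivity

lemma aux_conv {x y a b : ℝ} (hx : 0 < x) (hy : 0 < y) (ha : 0 ≤ a) (hb : 0 ≤ b)
    (hab : a + b = 1) : 1 / (a * x + b * y) ^ 2 ≤ a * (1 / x ^ 2) + b * (1 / y ^ 2) := by
  have h := (convexOn_zpow (𝕜 := ℝ) (-2)).2 (Set.mem_Ioi.2 hx) (Set.mem_Ioi.2 hy) ha hb hab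
  simp only [smul_eq_mul, zpow_neg] at h
  have e : ∀ z : ℝ, (z ^ (2 : ℤ))⁻¹ = 1 / z ^ 2 := by
    intro z; rw [one_div]; norm_cast
  rw [e, e, e] at h
  exact h

lemma trig_convexOn : ConvexOn ℝ (Set.Ioi 0) trigamma := by
  refine ⟨convex_Ioi 0, fun x hx y hy a b ha hb hab => ?_⟩
  have hx0 : (0 : ℝ) < x := hx
  have hy0 : (0 : ℝ) < y := hy
  have hpos : 0 < a * x + b * y := by
    rcases ha.eq_or_lt with rfl | ha'
    · have : b = 1 := by linarith
      simpa [this] using hy0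
    · nlinarith [mul_pos ha' hx0, mul_nonneg hb hy0.le]
  simp only [smul_eq_mul, trigamma]
  have hsum : Summable (fun n : ℕ =>
      a * (1 / (x + n) ^ 2) + b * (1 / (y + n) ^ 2)) :=
    ((summable_trig hx0).mul_left a).add ((summable_trig hy0).mul_left b)
  calc (∑' n : ℕ, 1 / (a * x + b * y + n) ^ 2)
      ≤ ∑' n : ℕ, (a * (1 / (x + n) ^ 2) + b * (1 / (y + n) ^ 2)) := by
        refine Summable.tsum_le_tsum (fun n => ?_) (summable_trig hpos) hsum
        have hxn : (0 : ℝ) < x + n := by positivity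
        have hyn : (0 : ℝ) < y + n := by positivity
        have h := aux_conv hxn hyn ha hb hab
        have e : a * (x + n) + b * (y + n) = a * x + b * y + n := by
          linear_combination (n : ℝ) * hab
        rwa [e] at h
    _ = a * (∑' n : ℕ, 1 / (x + n) ^ 2) + b * (∑' n : ℕ, 1 / (y + n) ^ 2) := by
        rw [Summable.tsum_add ((summable_trig hx0).mul_left a) ((summable_trig hy0).mul_left b),
          tsum_mul_left, tsum_mul_left]

lemma trig_antitoneOn : AntitoneOn trigamma (Set.Ioi 0) := by
  intro x hx y hy hxy
  have hx0 : (0 : ℝ) < x := hx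
  have hy0 : (0 : ℝ) < y := hy
  refine Summable.tsum_le_tsum (fun n => ?_) (summable_trig hy0) (summable_trig hx0)
  have hxn : (0 : ℝ) < x + n := by positivity
  have h2 : x + n ≤ y + n := by linarith
  gcongr

/-- The function `f(λ) = (λ-1)(ε̂(λ) - ε) + (λ-1)log(λ-1) - λ log λ`, with
`ε̂(λ) = (λ/2) Δ₂² ψ'(α_m - (λ-1) Δ_∞)`, is strictly convex on
`(1, α_m/Δ_∞ + 1)`. -/
theorem f_strictConvexOn (ε Δ2 Δinf αm : ℝ)
    (hε : 0 < ε) (hΔ2 : 0 < Δ2) (hΔinf : 0 < Δinf) (hαm : 0 < αm) :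
    StrictConvexOn ℝ (Set.Ioo (1 : ℝ) (αm / Δinf + 1))
      (fun l : ℝ =>
        (l - 1) * ((l / 2) * Δ2 ^ 2 * trigamma (αm - (l - 1) * Δinf) - ε)
          + (l - 1) * Real.log (l - 1) - l * Real.log l) := by
  have hS : Convex ℝ (Set.Ioo (1 : ℝ) (αm / Δinf + 1)) := convex_Ioo _ _
  have hg : ∀ l ∈ Set.Ioo (1 : ℝ) (αm / Δinf + 1), 0 < αm - (l - 1) * Δinf := by
    intro l hl
    have h2 : (l - 1) * Δinf < αm := (lt_div_iff₀ hΔinf).mp (by linarith [hl.2])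
    linarith
  -- the convex part
  have hq : ConvexOn ℝ (Set.Ioo (1 : ℝ) (αm / Δinf + 1)) (fun l : ℝ => (l - 1) * l) := by
    refine ⟨hS, fun x hx y hy a b ha hb hab => ?_⟩
    simp only [smul_eq_mul]
    have hb' : b = 1 - a := by linarith
    subst hb'
    nlinarith [mul_nonneg (mul_nonneg ha hb) (sq_nonneg (x - y))]
  have hqmono : MonotoneOn (fun l : ℝ => (l - 1) * l) (Set.Ioo (1 : ℝ) (αm / Δinf + 1)) := by
    intro x hx y hy hxy
    have h1 : (1 : ℝ) < x := hx.1
    have h2 := mul_nonneg (sub_nonneg.2 hxy) (show (0:ℝ) ≤ y + x - 1 by linarith)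
    simp only []
    nlinarith [h2]
  have hq0 : ∀ ⦃l⦄, l ∈ Set.Ioo (1 : ℝ) (αm / Δinf + 1) → 0 ≤ (l - 1) * l := by
    intro l hl; nlinarith [hl.1]
  have hT : ConvexOn ℝ (Set.Ioo (1 : ℝ) (αm / Δinf + 1))
      (fun l : ℝ => trigamma (αm - (l - 1) * Δinf)) := by
    refine ⟨hS, fun x hx y hy a b ha hb hab => ?_⟩
    simp only [smul_eq_mul]
    have h := trig_convexOn.2 (Set.mem_Ioi.2 (hg x hx)) (Set.mem_Ioi.2 (hg y hy)) ha hb hab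
    simp only [smul_eq_mul] at h
    have e : αm - (a * x + b * y - 1) * Δinf
        = a * (αm - (x - 1) * Δinf) + b * (αm - (y - 1) * Δinf) := by
      linear_combination (-(αm + Δinf)) * hab
    rw [e]; exact h
  have hTmono : MonotoneOn (fun l : ℝ => trigamma (αm - (l - 1) * Δinf))
      (Set.Ioo (1 : ℝ) (αm / Δinf + 1)) := by
    intro x hx y hy hxy
    refine trig_antitoneOn (Set.mem_Ioi.2 (hg y hy)) (Set.mem_Ioi.2 (hg x hx)) ?_
    nlinarith [mul_le_mul_of_nonneg_right hxy hΔinf.le]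
  have hT0 : ∀ ⦃l⦄, l ∈ Set.Ioo (1 : ℝ) (αm / Δinf + 1) →
      0 ≤ trigamma (αm - (l - 1) * Δinf) := fun l _ => trig_nonneg _
  have hmul : ConvexOn ℝ (Set.Ioo (1 : ℝ) (αm / Δinf + 1))
      ((fun l : ℝ => (l - 1) * l) * fun l : ℝ => trigamma (αm - (l - 1) * Δinf)) :=
    hq.mul hT hq0 hT0 (hqmono.monovaryOn hTmono)
  have hF1 : ConvexOn ℝ (Set.Ioo (1 : ℝ) (αm / Δinf + 1))
      ((Δ2 ^ 2 / 2) • ((fun l : ℝ => (l - 1) * l) * fun l : ℝ =>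
        trigamma (αm - (l - 1) * Δinf))) :=
    hmul.smul (by positivity)
  -- the strictly convex part
  have hd : ∀ x : ℝ, 1 < x → HasDerivAt
      (fun l : ℝ => (l - 1) * Real.log (l - 1) - l * Real.log l - ε * (l - 1))
      (Real.log (x - 1) - Real.log x - ε) x := by
    intro x hx
    have hx1 : x - 1 ≠ 0 := ne_of_gt (by linarith)
    have hx0 : x ≠ 0 := ne_of_gt (by linarith)
    have ha : HasDerivAt (fun l : ℝ => l - 1) 1 x := (hasDerivAt_id x).sub_const 1
    have hb : HasDerivAt (fun l : ℝ => Real.log (l - 1)) (1 / (x - 1)) x := by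
      simpa using ha.log hx1
    have h1 : HasDerivAt (fun l : ℝ => (l - 1) * Real.log (l - 1))
        (Real.log (x - 1) + 1) x := by
      have : HasDerivAt (fun l : ℝ => (l - 1) * Real.log (l - 1))
          (1 * Real.log (x - 1) + (x - 1) * (1 / (x - 1))) x := ha.mul hb
      convert this using 1
      field_simp
    have h2 : HasDerivAt (fun l : ℝ => l * Real.log l) (Real.log x + 1) x :=
      Real.hasDerivAt_mul_log hx0
    have h3 : HasDerivAt (fun l : ℝ => ε * (l - 1)) ε x := by
      simpa using ha.const_mul ε
    have : HasDerivAt (fun l : ℝ => (l - 1) * Real.log (l - 1) - l * Real.log l - ε * (l - 1))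
        (Real.log (x - 1) + 1 - (Real.log x + 1) - ε) x := (h1.sub h2).sub h3
    convert this using 1
    ring
  have hF2 : StrictConvexOn ℝ (Set.Ioo (1 : ℝ) (αm / Δinf + 1))
      (fun l : ℝ => (l - 1) * Real.log (l - 1) - l * Real.log l - ε * (l - 1)) := by
    refine strictConvexOn_of_deriv2_pos (convex_Ioo _ _) ?_ ?_
    · intro x hx
      exact (hd x hx.1).continuousAt.continuousWithinAt
    · intro x hx
      rw [interior_Ioo] at hx
      have hx1 : (1 : ℝ) < x := hx.1
      have hev : deriv (fun l : ℝ => (l - 1) * Real.log (l - 1) - l * Real.log l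
          - ε * (l - 1)) =ᶠ[nhds x] fun y => Real.log (y - 1) - Real.log y - ε :=
        Filter.eventuallyEq_of_mem (isOpen_Ioi.mem_nhds hx1)
          (fun y hy => (hd y hy).deriv)
      have hd2 : HasDerivAt (fun y : ℝ => Real.log (y - 1) - Real.log y - ε)
          ((x - 1)⁻¹ - x⁻¹) x := by
        have ha2 : HasDerivAt (fun l : ℝ => l - 1) 1 x := (hasDerivAt_id x).sub_const 1
        have hb : HasDerivAt (fun y : ℝ => Real.log (y - 1)) ((x - 1)⁻¹) x := by
          simpa using ha2.log (show x - 1 ≠ 0 from ne_of_gt (by linarith))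
        exact (hb.sub (Real.hasDerivAt_log (ne_of_gt (by linarith)))).sub_const ε
      have hiter : (deriv^[2] (fun l : ℝ => (l - 1) * Real.log (l - 1) - l * Real.log l
          - ε * (l - 1))) x = deriv (deriv (fun l : ℝ => (l - 1) * Real.log (l - 1)
          - l * Real.log l - ε * (l - 1))) x := rfl
      rw [hiter, hev.deriv_eq, hd2.deriv]
      have hlt : x⁻¹ < (x - 1)⁻¹ := by
        have := one_div_lt_one_div_of_lt (show (0:ℝ) < x - 1 by linarith)
          (show x - 1 < x by linarith)
        rwa [one_div, one_div] at this
      linarith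
  have hsum := hF1.add_strictConvexOn hF2
  convert hsum using 1
  rotate_left
  funext l
  simp only [Pi.add_apply, Pi.smul_apply, Pi.mul_apply, smul_eq_mul]
  ring
  rfl
end
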